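/- Let M be a smooth n-manifold and σ, ν : M → ℝ^{n+2} smooth maps with ⟨σ(p),σ(p)⟩ = −1, σ(p)_{n+2} > 0, ⟨ν(p),ν(p)⟩ = 1 and ⟨σ(p),ν(p)⟩ = 0 for all p ∈ M. Assume that ζ = (σ,ν) : M → ℝ^{n+2} × ℝ^{n+2} has injective differential at every point of M and is orthogonal to the generator of the geodesic flow, i.e. ⟨d_pσ(v), ν(p)⟩ = ⟨d_pν(v), σ(p)⟩ for all p ∈ M and v ∈ T_pM. If at a point p ∈ M the differential d_pσ is not injective, then there exists ε > 0 such that for every t with 0 < |t| < ε, the linear map cosh(t)·d_pσ + sinh(t)·d_pν : T_pM → ℝ^{n+2} is injective. -/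

import Mathlib

open scoped Manifold
open Function Set

/-- The Minkowski bilinear form on `ℝ^{n+2}`:
`⟨x,y⟩ = x₁y₁ + ⋯ + x_{n+1}y_{n+1} − x_{n+2}y_{n+2}`. -/
noncomputable def mink (n : ℕ) (x y : Fin (n + 2) → ℝ) : ℝ :=
  (∑ i : Fin (n + 1), x i.castSucc * y i.castSucc) -
    x (Fin.last (n + 1)) * y (Fin.last (n + 1))

namespace MinkAux

variable {n : ℕ}

/-- `mink` as a continuous bilinear map. -/
noncomputable def minkL (n : ℕ) :
    (Fin (n + 2) → ℝ) →L[ℝ] (Fin (n + 2) → ℝ) →L[ℝ] ℝ :=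
  (∑ i : Fin (n + 1),
    (ContinuousLinearMap.proj (R := ℝ) (φ := fun _ : Fin (n + 2) => ℝ)
      i.castSucc).smulRight (ContinuousLinearMap.proj i.castSucc)) -
  (ContinuousLinearMap.proj (R := ℝ) (φ := fun _ : Fin (n + 2) => ℝ)
      (Fin.last (n + 1))).smulRight (ContinuousLinearMap.proj (Fin.last (n + 1)))

@[simp] lemma minkL_apply (x y : Fin (n + 2) → ℝ) : minkL n x y = mink n x y := by
  simp [minkL, mink, ContinuousLinearMap.sum_apply, mul_comm]

lemma mink_symm (x y : Fin (n + 2) → ℝ) : mink n x y = mink n y x := by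
  simp [mink, mul_comm]

lemma mink_smul_left (c : ℝ) (x y : Fin (n + 2) → ℝ) :
    mink n (c • x) y = c * mink n x y := by
  rw [← minkL_apply, ← minkL_apply, map_smul]; simp

lemma mink_add_left (x x' y : Fin (n + 2) → ℝ) :
    mink n (x + x') y = mink n x y + mink n x' y := by
  rw [← minkL_apply, ← minkL_apply, ← minkL_apply, map_add]; simp

@[simp] lemma mink_zero_left (y : Fin (n + 2) → ℝ) : mink n 0 y = 0 := by
  simp [mink]

@[simp] lemma mink_zero_right (y : Fin (n + 2) → ℝ) : mink n y 0 = 0 := by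
  simp [mink]

lemma mink_sum_left {ι : Type*} (s : Finset ι) (f : ι → Fin (n + 2) → ℝ)
    (y : Fin (n + 2) → ℝ) :
    mink n (∑ i ∈ s, f i) y = ∑ i ∈ s, mink n (f i) y := by
  rw [← minkL_apply, map_sum]
  simp [ContinuousLinearMap.sum_apply]

/-- mink is positive on the mink-orthogonal complement of a normalized timelike vector. -/
lemma mink_pos {s x : Fin (n + 2) → ℝ} (hss : mink n s s = -1)
    (hs : 0 < s (Fin.last (n + 1))) (hxs : mink n x s = 0) (hx : x ≠ 0) :
    0 < mink n x x := by
  set L := Fin.last (n + 1)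
  set P := ∑ i : Fin (n + 1), x i.castSucc * s i.castSucc with hP
  set X := ∑ i : Fin (n + 1), x i.castSucc * x i.castSucc with hX
  set S := ∑ i : Fin (n + 1), s i.castSucc * s i.castSucc with hS
  have hxs' : P = x L * s L := by
    have := hxs; simp only [mink] at this; linarith
  have hss' : S = s L * s L - 1 := by
    have := hss; simp only [mink] at this; linarith
  have hCS : P ^ 2 ≤ X * S := by
    have := Finset.sum_mul_sq_le_sq_mul_sq Finset.univ
      (fun i : Fin (n + 1) => x i.castSucc) (fun i : Fin (n + 1) => s i.castSucc)
    calc P ^ 2 = (∑ i : Fin (n + 1), x i.castSucc * s i.castSucc) ^ 2 := by rw [hP]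
      _ ≤ (∑ i : Fin (n + 1), x i.castSucc ^ 2) *
            (∑ i : Fin (n + 1), s i.castSucc ^ 2) := this
      _ = X * S := by rw [hX, hS]; congr 1 <;> exact Finset.sum_congr rfl (by intros; ring)
  have hXnonneg : 0 ≤ X := Finset.sum_nonneg fun i _ => mul_self_nonneg _
  have hXpos : 0 < X := by
    rcases hXnonneg.lt_or_eq with h | h
    · exact h
    · exfalso
      have hzero : ∀ i : Fin (n + 1), x i.castSucc = 0 := by
        intro i
        have := (Finset.sum_eq_zero_iff_of_nonneg
          (fun i _ => mul_self_nonneg (x i.castSucc))).1 h.symm i (Finset.mem_univ i)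
        nlinarith [this]
      have hPL : P = 0 := Finset.sum_eq_zero fun i _ => by rw [hzero i]; ring
      have hxL : x L = 0 := by
        have := hxs'.symm.trans hPL
        have hsL : s L ≠ 0 := ne_of_gt hs
        rcases mul_eq_zero.1 this with h' | h'
        · exact h'
        · exact absurd h' hsL
      apply hx
      funext j
      simp only [Pi.zero_apply]
      induction j using Fin.lastCases with
      | last => exact hxL
      | cast i => exact hzero i
  have hP2 : P ^ 2 = (x L * s L) ^ 2 := by rw [hxs']
  have key : X ≤ (X - x L * x L) * (s L * s L) := by nlinarith [hCS, hP2, hss']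
  show 0 < X - x L * x L
  nlinarith [key, hXpos, mul_pos hs hs]

end MinkAux

namespace MinkAux

variable {n : ℕ}

/-- There is no family of `n+3` pairwise mink-orthogonal vectors of positive mink norm
in `ℝ^{n+2}`. -/
lemma no_big_orth_family (v : Fin (n + 3) → (Fin (n + 2) → ℝ))
    (hpos : ∀ i, 0 < mink n (v i) (v i))
    (horth : ∀ i j, i ≠ j → mink n (v i) (v j) = 0) : False := by
  have hli : LinearIndependent ℝ v := by
    rw [Fintype.linearIndependent_iff]
    intro g hg i
    have h0 : mink n (∑ j : Fin (n + 3), g j • v j) (v i) = 0 := by rw [hg]; simp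
    rw [mink_sum_left] at h0
    have h1 : ∀ j : Fin (n + 3), j ∈ Finset.univ → j ≠ i →
        mink n (g j • v j) (v i) = 0 := by
      intro j _ hj
      rw [mink_smul_left, horth j i hj, mul_zero]
    rw [Finset.sum_eq_single_of_mem i (Finset.mem_univ i) h1, mink_smul_left] at h0
    exact (mul_eq_zero.1 h0).resolve_right (ne_of_gt (hpos i))
  have := hli.fintype_card_le_finrank
  rw [Fintype.card_fin, Module.finrank_fintype_fun_eq_card, Fintype.card_fin] at this
  omega

/-- The set of bad parameters in the pencil `A + λB` is finite. -/
lemma pencil_finite {E : Type*} [NormedAddCommGroup E] [NormedSpace ℝ E]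
    (A B : E →L[ℝ] (Fin (n + 2) → ℝ)) (s0 : Fin (n + 2) → ℝ)
    (hss : mink n s0 s0 = -1) (hs : 0 < s0 (Fin.last (n + 1)))
    (hBs : ∀ u, mink n (B u) s0 = 0)
    (hsym : ∀ u w, mink n (A u) (B w) = mink n (A w) (B u))
    (hinj : ∀ u, A u = 0 → B u = 0 → u = 0) :
    {lam : ℝ | ∃ v, v ≠ 0 ∧ A v + lam • B v = 0}.Finite := by
  classical
  set Λ := {lam : ℝ | ∃ v, v ≠ 0 ∧ A v + lam • B v = 0} with hΛ
  by_contra hinf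
  have hinf' : Λ.Infinite := hinf
  obtain ⟨t, hts, hcard⟩ := hinf'.exists_subset_card_eq (n + 3)
  have htne : ∀ i : Fin (n + 3), True := fun _ => trivial
  -- an injective enumeration of n+3 elements of Λ
  let e : Fin (n + 3) → t := t.equivFin.symm ∘ Fin.cast hcard.symm
  have he : Function.Injective e :=
    t.equivFin.symm.injective.comp (Fin.cast_injective _)
  have hmem : ∀ i, (e i : ℝ) ∈ Λ := fun i => hts (e i).2
  -- witnesses
  choose v hv0 hveq using fun i => hmem i
  -- the images B (v i)
  have hBv : ∀ i, B (v i) ≠ 0 := by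
    intro i hBvi
    have hAvi : A (v i) = 0 := by
      have := hveq i; rw [hBvi, smul_zero, add_zero] at this; exact this
    exact hv0 i (hinj _ hAvi hBvi)
  have hApar : ∀ i, A (v i) = -((e i : ℝ)) • B (v i) := by
    intro i
    have := hveq i
    have h' : A (v i) = -((e i : ℝ) • B (v i)) := by
      rw [eq_neg_iff_add_eq_zero]; exact this
    rw [h', neg_smul]
  have horth : ∀ i j, i ≠ j → mink n (B (v i)) (B (v j)) = 0 := by
    intro i j hij
    have hlam : (e i : ℝ) ≠ (e j : ℝ) := by
      intro h
      exact hij (he (Subtype.ext h))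
    have h1 : mink n (A (v i)) (B (v j)) =
        -(e i : ℝ) * mink n (B (v i)) (B (v j)) := by
      rw [hApar i, mink_smul_left]
    have h2 : mink n (A (v j)) (B (v i)) =
        -(e j : ℝ) * mink n (B (v j)) (B (v i)) := by
      rw [hApar j, mink_smul_left]
    have h3 := hsym (v i) (v j)
    rw [h1, h2, mink_symm (B (v j)) (B (v i))] at h3
    have : ((e j : ℝ) - (e i : ℝ)) * mink n (B (v i)) (B (v j)) = 0 := by linarith
    exact (mul_eq_zero.1 this).resolve_left (sub_ne_zero.2 (Ne.symm hlam))
  exact no_big_orth_family (fun i => B (v i))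
    (fun i => mink_pos hss hs (hBs (v i)) (hBv i)) horth

lemma tanh_injective : Function.Injective Real.tanh := by
  intro a b h
  have ca := Real.cosh_pos a
  have cb := Real.cosh_pos b
  rw [Real.tanh_eq_sinh_div_cosh, Real.tanh_eq_sinh_div_cosh,
    div_eq_div_iff (ne_of_gt ca) (ne_of_gt cb)] at h
  have hs : Real.sinh (a - b) = 0 := by rw [Real.sinh_sub]; linarith
  have h0 : Real.sinh (a - b) = Real.sinh 0 := by rw [hs, Real.sinh_zero]
  have := Real.sinh_injective h0
  linarith

end MinkAux

namespace MinkAux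

variable {n : ℕ} {E : Type*} [NormedAddCommGroup E] [NormedSpace ℝ E]
variable {f g f₂ g₂ : E → (Fin (n + 2) → ℝ)}
variable {f' g' f₂' g₂' : E →L[ℝ] (Fin (n + 2) → ℝ)} {x : E}

lemma hasFDerivAt_mink (hf : HasFDerivAt f f' x) (hg : HasFDerivAt g g' x) :
    HasFDerivAt (fun y => mink n (f y) (g y))
      (((minkL n).isBoundedBilinearMap.deriv (f x, g x)).comp (f'.prod g')) x := by
  have hb := (minkL n).isBoundedBilinearMap
  have h2 := (hb.hasFDerivAt (f x, g x)).comp x (hf.prodMk hg)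
  have hfun : (fun y => mink n (f y) (g y)) =
      ((fun p : (Fin (n+2) → ℝ) × (Fin (n+2) → ℝ) => minkL n p.1 p.2) ∘ fun y => (f y, g y)) := by
    funext y; simp [Function.comp]
  rw [hfun]
  exact h2

lemma mink_deriv_eq (hf : HasFDerivAt f f' x) (hg : HasFDerivAt g g' x)
    (hf₂ : HasFDerivAt f₂ f₂' x) (hg₂ : HasFDerivAt g₂ g₂' x)
    (heq : (fun y => mink n (f y) (g y)) =ᶠ[nhds x] fun y => mink n (f₂ y) (g₂ y))
    (w : E) :
    mink n (f x) (g' w) + mink n (f' w) (g x) =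
      mink n (f₂ x) (g₂' w) + mink n (f₂' w) (g₂ x) := by
  have D1 := hasFDerivAt_mink hf hg
  have D2 := hasFDerivAt_mink hf₂ hg₂
  have hD := (D1.congr_of_eventuallyEq heq.symm).unique D2
  have := congrArg (fun L : E →L[ℝ] ℝ => L w) hD
  simpa [IsBoundedBilinearMap.deriv_apply] using this

lemma mink_deriv_const (hf : HasFDerivAt f f' x) (hg : HasFDerivAt g g' x)
    {c : ℝ} (heq : ∀ᶠ y in nhds x, mink n (f y) (g y) = c) (w : E) :
    mink n (f x) (g' w) + mink n (f' w) (g x) = 0 := by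
  have hc : mink n (f x) (g x) = c := heq.self_of_nhds
  have heq' : (fun y => mink n (f y) (g y)) =ᶠ[nhds x]
      fun _ => mink n (f x) (g x) := heq.mono fun y hy => by simp only []; rw [hy, hc]
  have := mink_deriv_eq hf hg (hasFDerivAt_const (f x) x) (hasFDerivAt_const (g x) x) heq' w
  simpa using this

end MinkAux

open MinkAux

/-- Let `ζ = (σ,ν) : M → T¹ℍ^{n+1}` be an immersion orthogonal to the generator of the
geodesic flow. If `d_pσ` is not injective at a point `p`, then there is `ε > 0` such
that for all `t` with `0 < |t| < ε` the differential of the projection to `ℍ^{n+1}` of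
`φ_t ∘ ζ`, namely `cosh(t)·d_pσ + sinh(t)·d_pν`, is injective. -/
theorem desingularize_for_small_time
    {n : ℕ} {M : Type*} [TopologicalSpace M]
    [ChartedSpace (EuclideanSpace ℝ (Fin n)) M]
    [IsManifold (𝓡 n) (⊤ : ℕ∞) M]
    (σ ν : M → Fin (n + 2) → ℝ)
    (hσ : ContMDiff (𝓡 n) 𝓘(ℝ, Fin (n + 2) → ℝ) (⊤ : ℕ∞) σ)
    (hν : ContMDiff (𝓡 n) 𝓘(ℝ, Fin (n + 2) → ℝ) (⊤ : ℕ∞) ν)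
    (hσσ : ∀ p, mink n (σ p) (σ p) = -1)
    (hpos : ∀ p, 0 < σ p (Fin.last (n + 1)))
    (hνν : ∀ p, mink n (ν p) (ν p) = 1)
    (hσν : ∀ p, mink n (σ p) (ν p) = 0)
    (hζimm : ∀ p, Function.Injective
      (mfderiv (𝓡 n) 𝓘(ℝ, (Fin (n + 2) → ℝ) × (Fin (n + 2) → ℝ))
        (fun q => (σ q, ν q)) p))
    (horth : ∀ p (v : EuclideanSpace ℝ (Fin n)),
      mink n (mfderiv (𝓡 n) 𝓘(ℝ, Fin (n + 2) → ℝ) σ p v) (ν p) =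
        mink n (mfderiv (𝓡 n) 𝓘(ℝ, Fin (n + 2) → ℝ) ν p v) (σ p))
    (p : M)
    (hsing : ¬ Function.Injective (mfderiv (𝓡 n) 𝓘(ℝ, Fin (n + 2) → ℝ) σ p)) :
    ∃ ε > 0, ∀ t : ℝ, 0 < |t| → |t| < ε →
      Function.Injective (fun v : EuclideanSpace ℝ (Fin n) =>
        letI a : Fin (n + 2) → ℝ := mfderiv (𝓡 n) 𝓘(ℝ, Fin (n + 2) → ℝ) σ p v
        letI b : Fin (n + 2) → ℝ := mfderiv (𝓡 n) 𝓘(ℝ, Fin (n + 2) → ℝ) ν p v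
        Real.cosh t • a + Real.sinh t • b) := by
  classical
  set e := extChartAt (𝓡 n) p with he
  set x0 : EuclideanSpace ℝ (Fin n) := e p with hx0def
  set F : EuclideanSpace ℝ (Fin n) → (Fin (n + 2) → ℝ) := σ ∘ e.symm with hFdef
  set G : EuclideanSpace ℝ (Fin n) → (Fin (n + 2) → ℝ) := ν ∘ e.symm with hGdef
  have hUopen : IsOpen e.target := isOpen_extChartAt_target p
  have hx0mem : x0 ∈ e.target := mem_extChartAt_target p
  have hUnhds : e.target ∈ nhds x0 := hUopen.mem_nhds hx0mem
  have hsymmp : e.symm x0 = p := extChartAt_to_inv p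
  -- smoothness of F and G in the chart
  have hFsm : ContDiffOn ℝ (⊤ : ℕ∞) F e.target :=
    (hσ.comp_contMDiffOn (contMDiffOn_extChartAt_symm p)).contDiffOn
  have hGsm : ContDiffOn ℝ (⊤ : ℕ∞) G e.target :=
    (hν.comp_contMDiffOn (contMDiffOn_extChartAt_symm p)).contDiffOn
  have hFc : ContDiffAt ℝ (⊤ : ℕ∞) F x0 := hFsm.contDiffAt hUnhds
  have hGc : ContDiffAt ℝ (⊤ : ℕ∞) G x0 := hGsm.contDiffAt hUnhds
  have hle1 : (1 : WithTop ℕ∞) ≤ ((⊤ : ℕ∞) : WithTop ℕ∞) := by exact_mod_cast (le_top : (1 : ℕ∞) ≤ ⊤)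
  have hle2 : (2 : WithTop ℕ∞) ≤ ((⊤ : ℕ∞) : WithTop ℕ∞) := by
    have h21 : ((2 : ℕ∞) : WithTop ℕ∞) = (2 : WithTop ℕ∞) := by norm_cast
    rw [← h21]; exact WithTop.coe_le_coe.mpr le_top
  have hle2' : ((1 : WithTop ℕ∞) + 1) ≤ ((⊤ : ℕ∞) : WithTop ℕ∞) := by
    rw [(by norm_num : (1 : WithTop ℕ∞) + 1 = 2)]; exact hle2
  have hFd : HasFDerivAt F (fderiv ℝ F x0) x0 := (hFc.differentiableAt (by simp)).hasFDerivAt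
  have hGd : HasFDerivAt G (fderiv ℝ G x0) x0 := (hGc.differentiableAt (by simp)).hasFDerivAt
  set A : EuclideanSpace ℝ (Fin n) →L[ℝ] (Fin (n + 2) → ℝ) := fderiv ℝ F x0 with hAdef
  set B : EuclideanSpace ℝ (Fin n) →L[ℝ] (Fin (n + 2) → ℝ) := fderiv ℝ G x0 with hBdef
  -- identification of the manifold derivatives at p
  have hσmd : MDifferentiableAt (𝓡 n) 𝓘(ℝ, Fin (n + 2) → ℝ) σ p :=
    hσ.mdifferentiableAt (by simp)
  have hνmd : MDifferentiableAt (𝓡 n) 𝓘(ℝ, Fin (n + 2) → ℝ) ν p :=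
    hν.mdifferentiableAt (by simp)
  have hAeq : mfderiv (𝓡 n) 𝓘(ℝ, Fin (n + 2) → ℝ) σ p = A := by
    rw [hσmd.mfderiv]
    simp only [writtenInExtChartAt, extChartAt_model_space_eq_id, PartialEquiv.refl_coe,
      CompTriple.comp_eq, modelWithCornersSelf_coe, Set.range_id, fderivWithin_univ]
    rfl
  have hBeq : mfderiv (𝓡 n) 𝓘(ℝ, Fin (n + 2) → ℝ) ν p = B := by
    rw [hνmd.mfderiv]
    simp only [writtenInExtChartAt, extChartAt_model_space_eq_id, PartialEquiv.refl_coe,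
      CompTriple.comp_eq, modelWithCornersSelf_coe, Set.range_id, fderivWithin_univ]
    rfl
  -- the orthogonality identity in the chart
  have hstar : ∀ x ∈ e.target, ∀ u : EuclideanSpace ℝ (Fin n),
      mink n (fderiv ℝ F x u) (G x) = mink n (fderiv ℝ G x u) (F x) := by
    intro x hxU u
    have hψ : MDifferentiableAt 𝓘(ℝ, EuclideanSpace ℝ (Fin n)) (𝓡 n) e.symm x :=
      ((contMDiffOn_extChartAt_symm p).mdifferentiableOn (by simp : ((⊤ : ℕ∞) : WithTop ℕ∞) ≠ 0)).mdifferentiableAt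
        (hUopen.mem_nhds hxU)
    have hcompF : mfderiv 𝓘(ℝ, EuclideanSpace ℝ (Fin n)) 𝓘(ℝ, Fin (n + 2) → ℝ) F x =
        (mfderiv (𝓡 n) 𝓘(ℝ, Fin (n + 2) → ℝ) σ (e.symm x)).comp
          (mfderiv 𝓘(ℝ, EuclideanSpace ℝ (Fin n)) (𝓡 n) e.symm x) :=
      mfderiv_comp x (hσ.mdifferentiableAt (by simp)) hψ
    have hcompG : mfderiv 𝓘(ℝ, EuclideanSpace ℝ (Fin n)) 𝓘(ℝ, Fin (n + 2) → ℝ) G x =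
        (mfderiv (𝓡 n) 𝓘(ℝ, Fin (n + 2) → ℝ) ν (e.symm x)).comp
          (mfderiv 𝓘(ℝ, EuclideanSpace ℝ (Fin n)) (𝓡 n) e.symm x) :=
      mfderiv_comp x (hν.mdifferentiableAt (by simp)) hψ
    have hFx : fderiv ℝ F x = mfderiv 𝓘(ℝ, EuclideanSpace ℝ (Fin n)) 𝓘(ℝ, Fin (n + 2) → ℝ) F x :=
      (mfderiv_eq_fderiv).symm
    have hGx : fderiv ℝ G x = mfderiv 𝓘(ℝ, EuclideanSpace ℝ (Fin n)) 𝓘(ℝ, Fin (n + 2) → ℝ) G x :=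
      (mfderiv_eq_fderiv).symm
    rw [hFx, hGx, hcompF, hcompG]
    exact horth (e.symm x) ((mfderiv 𝓘(ℝ, EuclideanSpace ℝ (Fin n)) (𝓡 n) e.symm x) u)
  -- first order identities at p
  have hFx0 : F x0 = σ p := by rw [hFdef]; simp [hsymmp]
  have hGx0 : G x0 = ν p := by rw [hGdef]; simp [hsymmp]
  have hAσ : ∀ u, mink n (A u) (σ p) = 0 := by
    intro u
    have := mink_deriv_const hFd hFd
      (Filter.Eventually.of_forall fun y => hσσ (e.symm y)) u
    rw [hFx0] at this
    rw [mink_symm] at this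
    linarith [this]
  have hmix : ∀ u, mink n (σ p) (B u) + mink n (A u) (ν p) = 0 := by
    intro u
    have := mink_deriv_const hFd hGd
      (Filter.Eventually.of_forall fun y => hσν (e.symm y)) u
    rwa [hFx0, hGx0] at this
  have horthp : ∀ u, mink n (A u) (ν p) = mink n (B u) (σ p) := by
    intro u
    have := horth p u
    rwa [hAeq, hBeq] at this
  have hBσ : ∀ u, mink n (B u) (σ p) = 0 := by
    intro u
    have h1 := hmix u
    rw [horthp u, mink_symm (σ p) (B u)] at h1
    linarith
  -- second derivatives and symmetry
  have hA2d : HasFDerivAt (fderiv ℝ F) (fderiv ℝ (fderiv ℝ F) x0) x0 :=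
    (((hFc.fderiv_right (m := 1) hle2').differentiableAt
      one_ne_zero)).hasFDerivAt
  have hB2d : HasFDerivAt (fderiv ℝ G) (fderiv ℝ (fderiv ℝ G) x0) x0 :=
    (((hGc.fderiv_right (m := 1) hle2').differentiableAt
      one_ne_zero)).hasFDerivAt
  set A2 := fderiv ℝ (fderiv ℝ F) x0 with hA2def
  set B2 := fderiv ℝ (fderiv ℝ G) x0 with hB2def
  have hA2symm : ∀ u w, A2 u w = A2 w u := fun u w => hFc.isSymmSndFDerivAt (by simpa [minSmoothness_of_isRCLikeNormedField] using hle2) u w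
  have hB2symm : ∀ u w, B2 u w = B2 w u := fun u w => hGc.isSymmSndFDerivAt (by simpa [minSmoothness_of_isRCLikeNormedField] using hle2) u w
  have hevalF : ∀ u : EuclideanSpace ℝ (Fin n), HasFDerivAt (fun x => fderiv ℝ F x u)
      ((ContinuousLinearMap.apply ℝ (Fin (n + 2) → ℝ) u).comp A2) x0 :=
    fun u => ((ContinuousLinearMap.apply ℝ (Fin (n + 2) → ℝ) u).hasFDerivAt).comp x0 hA2d
  have hevalG : ∀ u : EuclideanSpace ℝ (Fin n), HasFDerivAt (fun x => fderiv ℝ G x u)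
      ((ContinuousLinearMap.apply ℝ (Fin (n + 2) → ℝ) u).comp B2) x0 :=
    fun u => ((ContinuousLinearMap.apply ℝ (Fin (n + 2) → ℝ) u).hasFDerivAt).comp x0 hB2d
  have heq2 : ∀ u w : EuclideanSpace ℝ (Fin n),
      mink n (A u) (B w) + mink n (A2 w u) (ν p) =
        mink n (B u) (A w) + mink n (B2 w u) (σ p) := by
    intro u w
    have heqn : (fun x => mink n (fderiv ℝ F x u) (G x)) =ᶠ[nhds x0]
        fun x => mink n (fderiv ℝ G x u) (F x) :=
      Filter.eventuallyEq_of_mem hUnhds fun x hx => hstar x hx u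
    have := mink_deriv_eq (hevalF u) hGd (hevalG u) hFd heqn w
    simp only [ContinuousLinearMap.comp_apply, ContinuousLinearMap.apply_apply] at this
    rw [hFx0, hGx0] at this
    convert this using 2
  have hsym : ∀ u w, mink n (A u) (B w) = mink n (A w) (B u) := by
    intro u w
    have h1 := heq2 u w
    have h2 := heq2 w u
    rw [hA2symm u w, hB2symm u w] at h2
    have e1 : mink n (B u) (A w) = mink n (A w) (B u) := mink_symm _ _
    have e2 : mink n (B w) (A u) = mink n (A u) (B w) := mink_symm _ _
    linarith
  -- joint injectivity
  have hζmd : MDifferentiableAt (𝓡 n) 𝓘(ℝ, (Fin (n + 2) → ℝ) × (Fin (n + 2) → ℝ))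
      (fun q => (σ q, ν q)) p :=
    ((hσ.contMDiffAt (x := p)).prodMk_space (hν.contMDiffAt (x := p))).mdifferentiableAt (by simp)
  have hPeq : mfderiv (𝓡 n) 𝓘(ℝ, (Fin (n + 2) → ℝ) × (Fin (n + 2) → ℝ))
      (fun q => (σ q, ν q)) p = A.prod B := by
    rw [hζmd.mfderiv]
    simp only [writtenInExtChartAt, extChartAt_model_space_eq_id, PartialEquiv.refl_coe,
      CompTriple.comp_eq, modelWithCornersSelf_coe, Set.range_id, fderivWithin_univ]
    have : (fun q => (σ q, ν q)) ∘ ↑e.symm = fun y => (F y, G y) := rfl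
    rw [this]
    exact (hFd.prodMk hGd).fderiv
  have hinj : ∀ u : EuclideanSpace ℝ (Fin n), A u = 0 → B u = 0 → u = 0 := by
    intro u hAu hBu
    apply hζimm p
    rw [hPeq]
    show (A u, B u) = (A.prod B) 0
    rw [hAu, hBu]
    simp
  -- the pencil of bad parameters is finite
  have hΛfin : {lam : ℝ | ∃ v, v ≠ 0 ∧ A v + lam • B v = 0}.Finite :=
    pencil_finite A B (σ p) (hσσ p) (hpos p) hBσ hsym hinj
  set Λ := {lam : ℝ | ∃ v, v ≠ 0 ∧ A v + lam • B v = 0} with hΛdef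
  have claim : ∀ t : ℝ,
      ¬ Function.Injective (fun v : EuclideanSpace ℝ (Fin n) =>
        letI a : Fin (n + 2) → ℝ := mfderiv (𝓡 n) 𝓘(ℝ, Fin (n + 2) → ℝ) σ p v
        letI b : Fin (n + 2) → ℝ := mfderiv (𝓡 n) 𝓘(ℝ, Fin (n + 2) → ℝ) ν p v
        Real.cosh t • a + Real.sinh t • b) → Real.tanh t ∈ Λ := by
    intro t hni
    rw [Function.not_injective_iff] at hni
    obtain ⟨v1, v2, hval, hne⟩ := hni
    simp only [hAeq, hBeq] at hval
    refine ⟨v1 - v2, sub_ne_zero.2 hne, ?_⟩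
    have hch := Real.cosh_pos t
    have h0 : Real.cosh t • A (v1 - v2) + Real.sinh t • B (v1 - v2) = 0 := by
      simp only [map_sub, smul_sub]
      rw [sub_add_sub_comm, sub_eq_zero]
      exact hval
    calc A (v1 - v2) + Real.tanh t • B (v1 - v2)
        = (Real.cosh t)⁻¹ • (Real.cosh t • A (v1 - v2) + Real.sinh t • B (v1 - v2)) := by
          rw [smul_add, smul_smul, smul_smul, inv_mul_cancel₀ hch.ne', one_smul,
            Real.tanh_eq_sinh_div_cosh, div_eq_inv_mul]
      _ = 0 := by rw [h0, smul_zero]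
  have hTfin : ({t : ℝ | Real.tanh t ∈ Λ} \ {0}).Finite :=
    (hΛfin.preimage (tanh_injective.injOn)).diff
  by_cases hne : ({t : ℝ | Real.tanh t ∈ Λ} \ {0}).Nonempty
  · have hsne : (hTfin.toFinset.image fun t => |t|).Nonempty :=
      Finset.image_nonempty.2 (by rwa [Set.Finite.toFinset_nonempty])
    refine ⟨(hTfin.toFinset.image fun t => |t|).min' hsne, ?_, ?_⟩
    · obtain ⟨t0, ht0m, ht0e⟩ := Finset.mem_image.1 ((hTfin.toFinset.image fun t => |t|).min'_mem hsne)
      rw [Set.Finite.mem_toFinset] at ht0m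
      have ht0ne : t0 ≠ 0 := fun h => ht0m.2 (by simp [h])
      rw [← ht0e]
      exact abs_pos.2 ht0ne
    · intro t ht0 htε
      by_contra hni
      have htT : t ∈ {t : ℝ | Real.tanh t ∈ Λ} \ ({0} : Set ℝ) :=
        ⟨claim t hni, by simpa using abs_pos.1 ht0⟩
      have : (hTfin.toFinset.image fun t => |t|).min' hsne ≤ |t| :=
        Finset.min'_le _ _ (Finset.mem_image_of_mem _ (hTfin.mem_toFinset.2 htT))
      linarith
  · refine ⟨1, one_pos, ?_⟩
    intro t ht0 _
    by_contra hni
    exact hne ⟨t, claim t hni, by simpa using abs_pos.1 ht0⟩
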